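/- Let E be a directed graph and let v ∈ E⁰ be a vertex which emits infinitely many edges (|s⁻¹(v)| = ∞). Then Ω(v) := {w ∈ E⁰ \ {v} : w ≥ v fails} is a saturated hereditary subset of E⁰. -/
import Mathlib


/-- A (countable) directed graph `E = (E⁰, E¹, r, s)`:
a set of vertices, a set of edges, and range and source maps. -/
structure Digraph' where
  V : Type
  E : Type
  src : E → V
  rng : E → V

namespace Digraph'

variable (G : Digraph')

/-- `v ≥ w`: there is a path (possibly of length zero) from `v` to `w`. -/
def Reach (v w : G.V) : Prop :=
  Relation.ReflTransGen (fun a b : G.V => ∃ e : G.E, G.src e = a ∧ G.rng e = b) v w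

/-- A set `H` of vertices is hereditary if `v ∈ H` and `v ≥ w` imply `w ∈ H`. -/
def Hereditary (H : Set G.V) : Prop :=
  ∀ ⦃v w : G.V⦄, v ∈ H → G.Reach v w → w ∈ H

/-- A set `X` of vertices is saturated if every vertex `v` with `0 < |s⁻¹(v)| < ∞`
all of whose emitted edges have range in `X` itself belongs to `X`. -/
def Saturated (X : Set G.V) : Prop :=
  ∀ v : G.V, (G.src ⁻¹' {v}).Finite → (G.src ⁻¹' {v}).Nonempty →
    (∀ e : G.E, G.src e = v → G.rng e ∈ X) → v ∈ X

/-- The saturation `Σ(X)`: the smallest saturated set containing `X`. -/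
def saturation (X : Set G.V) : Set G.V :=
  ⋂₀ {Y : Set G.V | G.Saturated Y ∧ X ⊆ Y}

/-- `ΣH(X)`: the smallest saturated hereditary set containing `X`. -/
def satHered (X : Set G.V) : Set G.V :=
  ⋂₀ {Y : Set G.V | G.Saturated Y ∧ G.Hereditary Y ∧ X ⊆ Y}

end Digraph'

namespace Digraph'

variable (G : Digraph')

/-- `Ω(X)`: the vertices outside `X` from which there is no path to any vertex of `X`. -/
def Omega (X : Set G.V) : Set G.V :=
  {w : G.V | w ∉ X ∧ ∀ v ∈ X, ¬ G.Reach w v}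

end Digraph'

/-- If `v` emits infinitely many edges, then
`Ω(v) = {w ≠ v : w ≥ v fails}` is saturated and hereditary. -/
theorem stmt_6 (G : Digraph') [Countable G.V] [Countable G.E] (v : G.V)
    (hv : (G.src ⁻¹' {v}).Infinite) :
    G.Saturated (G.Omega {v}) ∧ G.Hereditary (G.Omega {v}) := by
  constructor
  · intro u hfin hne hall
    have huv : u ≠ v := by
      rintro rfl
      exact hv hfin
    refine ⟨by simpa using huv, ?_⟩
    intro x hx hreach
    rcases Relation.ReflTransGen.cases_head hreach with rfl | ⟨b, ⟨e, he, hr⟩, htail⟩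
    · exact huv hx
    · exact (hall e he).2 x hx (hr ▸ htail)
  · intro w u hw hwu
    rcases hw with ⟨hwv, hnr⟩
    constructor
    · rintro rfl
      exact hnr u rfl hwu
    · rintro x rfl hux
      exact hnr x rfl (hwu.trans hux)
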